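/- Let q be a prime power and α = (α₀,...,αₙ) ∈ F_q^{n+1} with rank H_{n₁,n₂}(α) = r = ρ₁ + π₁, ρ(α) = ρ₁, π(α) = π₁ ≥ 1, and 0 ≤ r ≤ n₁ - 1. Then for every value of α_{n+1} ∈ F_q, the extension α' = (α₀,...,αₙ,α_{n+1}) satisfies ρ(α') = ρ₁ and π(α') = π₁ + 1 (so the rank of the extended near-square Hankel matrix is r+1). The first characteristic polynomial is unchanged, A₁' = A₁, and A₂' = βT^{c₂-c₁}A₁ + A₂ for some β ∈ F_q, with c₁ = r, c₂ = n+2-r, where α_{n+1} ↔ β is a bijection. -/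

import Mathlib

open Matrix Polynomial

/-- The `l × m` Hankel matrix whose `(i,j)` entry (zero-indexed) is `α (i + j)`. -/
def hankel (F : Type) [Field F] (l m : ℕ) (α : ℕ → F) : Matrix (Fin l) (Fin m) F :=
  Matrix.of fun i j => α (i.1 + j.1)

/-- `ρ(α)`: the largest `l ≤ n₁ = (n+2)/2` such that the top-left `l × l` Hankel matrix
of `α` is invertible (`0` if none exists). -/
noncomputable def rhoC (F : Type) [Field F] (n : ℕ) (α : ℕ → F) : ℕ :=
  sSup {l | l ≤ (n + 2) / 2 ∧ (hankel F l l α).det ≠ 0}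

/-- `π(α) = rank H_{n₁,n₂}(α) - ρ(α)`. -/
noncomputable def piC (F : Type) [Field F] (n : ℕ) (α : ℕ → F) : ℕ :=
  (hankel F ((n + 2) / 2) ((n + 3) / 2) α).rank - rhoC F n α

/-- `deg B ≤ k` for an integer bound `k` (so `k < 0` forces `B = 0`). -/
def degLE (F : Type) [Field F] (B : Polynomial F) (k : ℤ) : Prop :=
  ∀ i : ℕ, k < (i : ℤ) → B.coeff i = 0

/-- `A₁, A₂` are characteristic polynomials for the sequence `α` (of length `n+1`) with
first characteristic degree `c₁ = r` and second characteristic degree `c₂ = n+2-r`: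
the kernels of all the Hankel matrices `H_{l,m}(α)`, `l+m-2 = n`, consist exactly of the
(coefficient vectors of) polynomials `B₁A₁ + B₂A₂` with `deg B₁ ≤ m - c₁ - 1` and
`deg B₂ ≤ m - c₂ - 1`. -/
def IsCharSeq (F : Type) [Field F] (n r : ℕ) (A₁ A₂ : Polynomial F) (α : ℕ → F) : Prop :=
  ∀ l m : ℕ, 1 ≤ l → 1 ≤ m → l + m = n + 2 →
    {v : Fin m → F | (hankel F l m α).mulVec v = 0} =
    {v : Fin m → F | ∃ B₁ B₂ : Polynomial F,
      degLE F B₁ ((m : ℤ) - r - 1) ∧ degLE F B₂ ((m : ℤ) - ((n : ℤ) + 2 - r) - 1) ∧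
      v = fun i : Fin m => (B₁ * A₁ + B₂ * A₂).coeff (i : ℕ)}

/-- A sequence `α ∈ F^{n+1}` viewed as a function `ℕ → F` (zero beyond index `n`). -/
def extSeq (F : Type) [Field F] (n : ℕ) (α : Fin (n + 1) → F) : ℕ → F :=
  fun i => if h : i < n + 1 then α ⟨i, h⟩ else 0

/-- The extension of a sequence of length `n+1` by a new entry `c` at index `n+1`. -/
def extendSeq (F : Type) [Field F] (n : ℕ) (α : ℕ → F) (c : F) : ℕ → F :=
  fun i => if i = n + 1 then c else α i

namespace Stmt18
open Polynomial Matrix Finset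

variable {F : Type} [Field F]

/-- pairing `∑ γ(k+j) P_j`. -/
noncomputable def sfn (γ : ℕ → F) (k : ℕ) (P : F[X]) : F :=
  P.sum fun j a => γ (k + j) * a

lemma poly_sum_eq_range {M : Type*} [AddCommMonoid M] (P : F[X]) (f : ℕ → F → M)
    (hf : ∀ t, f t 0 = 0) (N : ℕ) (h : ∀ j, N ≤ j → P.coeff j = 0) :
    P.sum f = ∑ t ∈ Finset.range N, f t (P.coeff t) := by
  rw [Polynomial.sum]
  apply Finset.sum_subset
  · intro j hj
    simp only [Finset.mem_range]
    by_contra hN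
    exact (Polynomial.mem_support_iff.mp hj) (h j (le_of_not_gt hN))
  · intro j _ hj
    rw [Polynomial.notMem_support_iff.mp hj, hf]

lemma sfn_eq_range (γ : ℕ → F) (k N : ℕ) (P : F[X]) (h : ∀ j, N ≤ j → P.coeff j = 0) :
    sfn γ k P = ∑ j ∈ Finset.range N, γ (k + j) * P.coeff j :=
  poly_sum_eq_range P _ (fun t => mul_zero _) N h

lemma sfn_add (γ : ℕ → F) (k : ℕ) (P Q : F[X]) :
    sfn γ k (P + Q) = sfn γ k P + sfn γ k Q :=
  Polynomial.sum_add_index P Q _ (fun i => mul_zero _) (fun a b₁ b₂ => mul_add _ _ _)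

lemma sfn_C_mul (γ : ℕ → F) (k : ℕ) (b : F) (P : F[X]) :
    sfn γ k (C b * P) = b * sfn γ k P := by
  rw [sfn_eq_range γ k (P.natDegree + 1) (C b * P)
      (fun j hj => by rw [coeff_C_mul, coeff_eq_zero_of_natDegree_lt (by omega), mul_zero]),
    sfn_eq_range γ k (P.natDegree + 1) P
      (fun j hj => coeff_eq_zero_of_natDegree_lt (by omega)),
    Finset.mul_sum]
  apply Finset.sum_congr rfl
  intro j _
  rw [coeff_C_mul]
  ring

lemma sfn_X_mul (γ : ℕ → F) (k : ℕ) (P : F[X]) :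
    sfn γ k (X * P) = sfn γ (k + 1) P := by
  rw [sfn_eq_range γ k (P.natDegree + 2) (X * P) (fun j hj => by
      apply coeff_eq_zero_of_natDegree_lt
      calc (X * P).natDegree ≤ X.natDegree + P.natDegree := natDegree_mul_le
        _ < j := by rw [natDegree_X]; omega),
    sfn_eq_range γ (k+1) (P.natDegree + 1) P
      (fun j hj => coeff_eq_zero_of_natDegree_lt (by omega)),
    Finset.sum_range_succ']
  simp only [Polynomial.mul_coeff_zero, coeff_X_zero, zero_mul, mul_zero, add_zero]
  apply Finset.sum_congr rfl
  intro j _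
  rw [Polynomial.coeff_X_mul]
  congr 2
  omega

lemma sfn_X_pow_mul (γ : ℕ → F) (k t : ℕ) (P : F[X]) :
    sfn γ k (X ^ t * P) = sfn γ (k + t) P := by
  induction t generalizing k P with
  | zero => simp
  | succ t ih =>
      have h : X ^ (t+1) * P = X ^ t * (X * P) := by ring
      rw [h, ih, sfn_X_mul, Nat.add_assoc]

lemma sfn_mul (γ : ℕ → F) (k : ℕ) (B Q : F[X]) :
    sfn γ k (B * Q) = B.sum fun t bt => bt * sfn γ (k + t) Q := by
  induction B using Polynomial.induction_on' with
  | add p q hp hq =>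
      rw [add_mul, sfn_add, hp, hq]
      exact (Polynomial.sum_add_index p q (fun t bt => bt * sfn γ (k + t) Q)
        (fun i => zero_mul _) (fun a b₁ b₂ => add_mul _ _ _)).symm
  | monomial t b =>
      rw [Polynomial.sum_monomial_index b _ (zero_mul _), ← C_mul_X_pow_eq_monomial,
        mul_assoc, sfn_C_mul, sfn_X_pow_mul]

lemma sfn_mul_range (γ : ℕ → F) (k : ℕ) (B Q : F[X]) (N : ℕ)
    (hB : ∀ j, N ≤ j → B.coeff j = 0) :
    sfn γ k (B * Q) = ∑ t ∈ Finset.range N, B.coeff t * sfn γ (k + t) Q := by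
  rw [sfn_mul]
  exact poly_sum_eq_range B (fun t bt => bt * sfn γ (k + t) Q) (fun t => zero_mul _) N hB

lemma sfn_congr {γ₁ γ₂ : ℕ → F} {k : ℕ} {P : F[X]}
    (h : ∀ j, P.coeff j ≠ 0 → γ₁ (k + j) = γ₂ (k + j)) :
    sfn γ₁ k P = sfn γ₂ k P := by
  unfold sfn Polynomial.sum
  apply Finset.sum_congr rfl
  intro j hj
  show γ₁ (k + j) * P.coeff j = γ₂ (k + j) * P.coeff j
  rw [h j (Polynomial.mem_support_iff.mp hj)]

lemma degLE_neg {B : F[X]} {k : ℤ} (h : degLE F B k) (hk : k < 0) : B = 0 :=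
  Polynomial.ext fun i => by
    rw [coeff_zero]
    exact h i (lt_of_lt_of_le hk (Int.ofNat_nonneg i))

lemma degLE_coeff_mul {B A : F[X]} {k : ℤ} {D : ℕ} (hB : degLE F B k) (hA : A.natDegree ≤ D)
    (i : ℕ) (hi : k + (D : ℤ) < (i : ℤ)) : (B * A).coeff i = 0 := by
  rw [Polynomial.coeff_mul]
  apply Finset.sum_eq_zero
  intro x hx
  have hxi : x.1 + x.2 = i := Finset.HasAntidiagonal.mem_antidiagonal.mp hx
  rcases le_or_gt (x.1 : ℤ) k with h1 | h1
  · have : A.natDegree < x.2 := by omega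
    rw [Polynomial.coeff_eq_zero_of_natDegree_lt this, mul_zero]
  · rw [hB x.1 h1, zero_mul]

lemma coeff_C_mul_X_pow_mul (b : F) (e : ℕ) (B : F[X]) (i : ℕ) :
    (C b * X ^ e * B).coeff i = if e ≤ i then b * B.coeff (i - e) else 0 := by
  rw [mul_assoc, coeff_C_mul, mul_comm (X ^ e) B, Polynomial.coeff_mul_X_pow']
  split <;> simp

lemma hankel_mulVec_row (γ : ℕ → F) (l m : ℕ) (P : F[X])
    (hP : ∀ j, m ≤ j → P.coeff j = 0) (i : Fin l) :
    (hankel F l m γ).mulVec (fun j : Fin m => P.coeff j) i = sfn γ i P := by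
  rw [sfn_eq_range γ i m P hP]
  simp only [Matrix.mulVec, dotProduct, hankel, Matrix.of_apply]
  exact Fin.sum_univ_eq_sum_range (fun j => γ (i.1 + j) * P.coeff j) m

end Stmt18

namespace Stmt18
open Polynomial Matrix Finset

variable {F : Type} [Field F] {n r ρ₁ : ℕ} {α : ℕ → F} {A₁ A₂ : F[X]}

lemma sfn_rep_vanish (hchar : IsCharSeq F n r A₁ A₂ α)
    {l m : ℕ} (hl : 1 ≤ l) (hm : 1 ≤ m) (hlm : l + m = n + 2)
    {B₁ B₂ : F[X]} (h1 : degLE F B₁ ((m : ℤ) - r - 1))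
    (h2 : degLE F B₂ ((m : ℤ) - ((n : ℤ) + 2 - r) - 1))
    (hP : ∀ j, m ≤ j → (B₁ * A₁ + B₂ * A₂).coeff j = 0)
    (i : Fin l) : sfn α i (B₁ * A₁ + B₂ * A₂) = 0 := by
  have hv : (fun j : Fin m => (B₁ * A₁ + B₂ * A₂).coeff j.1) ∈
      {v : Fin m → F | (hankel F l m α).mulVec v = 0} := by
    rw [hchar l m hl hm hlm]
    exact ⟨B₁, B₂, h1, h2, rfl⟩
  have h := congrFun hv i
  rwa [hankel_mulVec_row α l m _ hP i, Pi.zero_apply] at h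

lemma u_vanish (hchar : IsCharSeq F n r A₁ A₂ α) (hnd1 : A₁.natDegree = ρ₁)
    (hρr : ρ₁ + 1 ≤ r) (hr2 : 2 * r ≤ n) (k : ℕ) (hk : k ≤ n - r) :
    sfn α k A₁ = 0 := by
  have h1 : degLE F ((X : F[X]) ^ k) (((r+1+k : ℕ) : ℤ) - r - 1) := by
    intro i hi
    rw [coeff_X_pow, if_neg (by push_cast at hi; omega)]
  have h2 : degLE F (0 : F[X]) (((r+1+k : ℕ) : ℤ) - ((n : ℤ) + 2 - r) - 1) := fun i _ => rfl
  have hP : ∀ j, (r+1+k) ≤ j → ((X : F[X])^k * A₁ + 0 * A₂).coeff j = 0 := by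
    intro j hj
    rw [zero_mul, add_zero]
    apply coeff_eq_zero_of_natDegree_lt
    calc ((X : F[X])^k*A₁).natDegree ≤ ((X : F[X])^k).natDegree + A₁.natDegree :=
          natDegree_mul_le
      _ = k + ρ₁ := by rw [natDegree_X_pow, hnd1]
      _ < j := by omega
  have h := sfn_rep_vanish hchar (l := n+1-r-k) (m := r+1+k) (by omega) (by omega) (by omega)
    h1 h2 hP ⟨0, by omega⟩
  rw [zero_mul, add_zero] at h
  have h' := sfn_X_pow_mul α 0 k A₁
  rw [show ((⟨0, by omega⟩ : Fin (n+1-r-k)) : ℕ) = 0 from rfl, h'] at h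
  simpa using h

lemma t_vanish (hchar : IsCharSeq F n r A₁ A₂ α) (hnd2 : A₂.natDegree = n + 2 - r)
    (hr2 : 2 * r ≤ n) (k : ℕ) (hk : k + 2 ≤ r) :
    sfn α k A₂ = 0 := by
  have h1 : degLE F (0 : F[X]) (((n+3-r : ℕ) : ℤ) - r - 1) := fun i _ => rfl
  have h2 : degLE F (1 : F[X]) (((n+3-r : ℕ) : ℤ) - ((n : ℤ) + 2 - r) - 1) := by
    intro i hi
    rw [coeff_one, if_neg (by push_cast at hi ⊢; omega)]
  have hP : ∀ j, (n+3-r) ≤ j → ((0 : F[X]) * A₁ + 1 * A₂).coeff j = 0 := by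
    intro j hj
    rw [zero_mul, one_mul, zero_add]
    exact coeff_eq_zero_of_natDegree_lt (by omega)
  have h := sfn_rep_vanish hchar (l := r-1) (m := n+3-r) (by omega) (by omega) (by omega)
    h1 h2 hP ⟨k, by omega⟩
  rw [zero_mul, one_mul, zero_add] at h
  exact h

lemma S1_ne (hchar : IsCharSeq F n r A₁ A₂ α) (hnd1 : A₁.natDegree = ρ₁) (hA1 : A₁ ≠ 0)
    (hρr : ρ₁ + 1 ≤ r) (hr2 : 2 * r ≤ n) (hr1 : 1 ≤ r) :
    sfn α (n+1-r) A₁ ≠ 0 := by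
  intro hS
  set e := n + 2 - 2*r with he
  have hdeg : ((X : F[X])^e * A₁).natDegree = e + ρ₁ := by
    rw [natDegree_mul (pow_ne_zero _ X_ne_zero) hA1, natDegree_X_pow, hnd1]
  have hPc : ∀ j, n+2-r ≤ j → ((X : F[X])^e * A₁).coeff j = 0 := fun j hj =>
    coeff_eq_zero_of_natDegree_lt (by rw [hdeg]; omega)
  have hv : (hankel F r (n+2-r) α).mulVec (fun j : Fin (n+2-r) => ((X : F[X])^e*A₁).coeff j.1) = 0 := by
    funext i
    rw [hankel_mulVec_row α r (n+2-r) _ hPc i, sfn_X_pow_mul, Pi.zero_apply]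
    rcases Nat.lt_or_ge (i.1+1) r with hi | hi
    · exact u_vanish hchar hnd1 hρr hr2 (i.1+e) (by omega)
    · have hii : i.1 = r - 1 := by omega
      rw [show i.1 + e = n+1-r by omega]
      exact hS
  have hiff := Set.ext_iff.mp (hchar r (n+2-r) hr1 (by omega) (by omega))
    (fun j : Fin (n+2-r) => ((X : F[X])^e*A₁).coeff j.1)
  have hmem := hiff.mp hv
  obtain ⟨B₁, B₂, hB1, hB2, hveq⟩ := hmem
  have hc : ((n+2-r : ℕ) : ℤ) = (n : ℤ) + 2 - r := by omega
  have hB20 : B₂ = 0 := degLE_neg hB2 (by rw [hc]; norm_num)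
  have hpoly : (X : F[X])^e * A₁ = B₁ * A₁ := by
    apply Polynomial.ext; intro j
    rcases Nat.lt_or_ge j (n+2-r) with hj | hj
    · have h := congrFun hveq ⟨j, hj⟩
      simpa [hB20] using h
    · rw [hPc j hj]
      exact (degLE_coeff_mul hB1 (le_of_eq hnd1) j (by rw [hc]; omega)).symm
  have hX : (X : F[X])^e = B₁ := mul_right_cancel₀ hA1 hpoly
  have h1 : B₁.coeff e = 1 := by rw [← hX, coeff_X_pow, if_pos rfl]
  rw [hB1 e (by rw [hc]; omega)] at h1
  exact one_ne_zero h1.symm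

end Stmt18

open Stmt18 in
/-- extending a non-quasi-regular sequence `α ∈ L_n(r,ρ₁,π₁)` (`π₁ ≥ 1`)
by one entry `α_{n+1} = c`. For every `c`, `ρ(α') = ρ₁`, `π(α') = π₁ + 1` and the rank
becomes `r+1`; the characteristic polynomials become `A₁' = A₁` and
`A₂' = β T^{c₂-c₁} A₁ + A₂` where `β = b c` and `b : F → F` is a bijection
(the correspondence `α_{n+1} ↔ β`). -/
theorem stmt_18 (F : Type) [Field F] [Fintype F] (n r ρ₁ π₁ : ℕ) (α : ℕ → F)
    (A₁ A₂ : Polynomial F)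
    (hπ₁ : 1 ≤ π₁) (hrsum : r = ρ₁ + π₁) (hr : r + 1 ≤ (n + 2) / 2)
    (hrank : (hankel F ((n + 2) / 2) ((n + 3) / 2) α).rank = r)
    (hρ : rhoC F n α = ρ₁) (hπ : piC F n α = π₁)
    (hcop : IsCoprime A₁ A₂)
    (hd1 : A₁.degree = (ρ₁ : WithBot ℕ))
    (hd2 : A₂.degree = ((n + 2 - r : ℕ) : WithBot ℕ))
    (hchar : IsCharSeq F n r A₁ A₂ α) :
    ∃ b : F → F, Function.Bijective b ∧ ∀ c : F,
      rhoC F (n + 1) (extendSeq F n α c) = ρ₁ ∧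
      piC F (n + 1) (extendSeq F n α c) = π₁ + 1 ∧
      (hankel F ((n + 3) / 2) ((n + 4) / 2) (extendSeq F n α c)).rank = r + 1 ∧
      IsCharSeq F (n + 1) (r + 1) A₁
        (Polynomial.C (b c) * Polynomial.X ^ (n + 2 - 2 * r) * A₁ + A₂)
        (extendSeq F n α c) := by
  classical
  have hr2 : 2 * r ≤ n := by omega
  have hr1 : 1 ≤ r := by omega
  have hnd1 : A₁.natDegree = ρ₁ := natDegree_eq_of_degree_eq_some hd1
  have hA1ne : A₁ ≠ 0 := fun h => by simp [h, Polynomial.degree_zero] at hd1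
  have hnd2 : A₂.natDegree = n + 2 - r := natDegree_eq_of_degree_eq_some hd2
  have hA2ne : A₂ ≠ 0 := fun h => by simp [h, Polynomial.degree_zero] at hd2
  have hρr : ρ₁ + 1 ≤ r := by omega
  set S₁ := sfn α (n+1-r) A₁ with hS₁def
  have hS₁ : S₁ ≠ 0 := S1_ne hchar hnd1 hA1ne hρr hr2 hr1
  set a := A₂.coeff (n+2-r) with hadef
  have ha : a ≠ 0 := by
    have h := Polynomial.leadingCoeff_ne_zero.mpr hA2ne
    rwa [Polynomial.leadingCoeff, hnd2] at h
  have hlead1 : A₁.coeff ρ₁ ≠ 0 := by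
    have h := Polynomial.leadingCoeff_ne_zero.mpr hA1ne
    rwa [Polynomial.leadingCoeff, hnd1] at h
  have hA2c : ∀ j, n+3-r ≤ j → A₂.coeff j = 0 := fun j hj =>
    Polynomial.coeff_eq_zero_of_natDegree_lt (by omega)
  have hTsum : ∀ c : F, sfn (extendSeq F n α c) (r-1) A₂
      = c * a + ∑ j ∈ Finset.range (n+2-r), α (r-1+j) * A₂.coeff j := by
    intro c
    rw [sfn_eq_range _ _ (n+3-r) _ hA2c, show n+3-r = (n+2-r)+1 by omega,
      Finset.sum_range_succ, add_comm]
    congr 1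
    · show extendSeq F n α c (r-1+(n+2-r)) * A₂.coeff (n+2-r) = c * a
      rw [show r-1+(n+2-r) = n+1 by omega, hadef]
      show (if n+1 = n+1 then c else α (n+1)) * A₂.coeff (n+2-r) = _
      rw [if_pos rfl]
    · apply Finset.sum_congr rfl
      intro j hj
      simp only [Finset.mem_range] at hj
      show (if r-1+j = n+1 then c else α (r-1+j)) * A₂.coeff j = _
      rw [if_neg (by omega)]
  set b : F → F := fun c => -(sfn (extendSeq F n α c) (r-1) A₂) / S₁ with hbdef
  have hbinj : Function.Injective b := by
    intro c₁ c₂ h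
    simp only [hbdef] at h
    have h2 : sfn (extendSeq F n α c₁) (r-1) A₂ = sfn (extendSeq F n α c₂) (r-1) A₂ := by
      field_simp at h
      exact neg_inj.mp h
    rw [hTsum, hTsum] at h2
    exact mul_right_cancel₀ ha (add_right_cancel h2)
  refine ⟨b, Finite.injective_iff_bijective.mp hbinj, fun c => ?_⟩
  set α' := extendSeq F n α c with hα'def
  set β := b c with hβdef
  set e := n + 2 - 2*r with hedef
  set A₂' := Polynomial.C β * Polynomial.X ^ e * A₁ + A₂ with hA₂'def
  have hαeq : ∀ i, i ≠ n+1 → α' i = α i := fun i hi => if_neg hi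
  have hαtop : α' (n+1) = c := if_pos rfl
  have hext : ∀ (k : ℕ) (P : Polynomial F), k + P.natDegree ≤ n → sfn α' k P = sfn α k P := by
    intro k P h
    apply sfn_congr
    intro j hj
    have hjd : j ≤ P.natDegree := Polynomial.le_natDegree_of_ne_zero hj
    exact hαeq (k+j) (by omega)
  have hu0 : ∀ k, k ≤ n - r → sfn α' k A₁ = 0 := by
    intro k hk
    rw [hext k A₁ (by rw [hnd1]; omega)]
    exact u_vanish hchar hnd1 hρr hr2 k hk
  have hu1 : sfn α' (n+1-r) A₁ = S₁ := hext (n+1-r) A₁ (by rw [hnd1]; omega)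
  have hβS : β * S₁ = -(sfn α' (r-1) A₂) := by
    rw [hβdef, hbdef]
    field_simp
    rfl
  have hTc : sfn α' (r-1) A₂ = -(β * S₁) := by rw [hβS, neg_neg]
  have ht'A2 : ∀ k, k + 2 ≤ r → sfn α' k A₂ = 0 := by
    intro k hk
    rw [hext k A₂ (by rw [hnd2]; omega)]
    exact t_vanish hchar hnd2 hr2 k hk
  have hA2'expand : ∀ (γ : ℕ → F) (k : ℕ),
      sfn γ k A₂' = β * sfn γ (k+e) A₁ + sfn γ k A₂ := by
    intro γ k
    rw [hA₂'def, sfn_add, mul_assoc, sfn_C_mul, sfn_X_pow_mul]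
  have ht' : ∀ k, k + 1 ≤ r → sfn α' k A₂' = 0 := by
    intro k hk
    rcases Nat.lt_or_ge (k+1) r with hk2 | hk2
    · rw [hA2'expand, hu0 (k+e) (by omega), ht'A2 k (by omega), mul_zero, add_zero]
    · have hkr : k = r - 1 := by omega
      rw [hA2'expand, hkr, show r-1+e = n+1-r by omega, hu1, hTc]
      ring
  have hnd2' : A₂'.natDegree ≤ n + 2 - r := by
    rw [hA₂'def]
    apply le_trans (Polynomial.natDegree_add_le _ _)
    have h1 : (Polynomial.C β * Polynomial.X^e * A₁).natDegree ≤ e + ρ₁ := by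
      apply le_trans Polynomial.natDegree_mul_le
      have h2 : (Polynomial.C β * Polynomial.X^e : Polynomial F).natDegree ≤ e :=
        le_trans Polynomial.natDegree_mul_le
          (by simp [Polynomial.natDegree_C, Polynomial.natDegree_X_pow])
      rw [hnd1]
      omega
    rw [hnd2]
    omega
  have hA2'c : ∀ j, n+3-r ≤ j → A₂'.coeff j = 0 := fun j hj =>
    Polynomial.coeff_eq_zero_of_natDegree_lt (by omega)
  -- core forward direction
  have hRL : ∀ (l m : ℕ), l + m = n + 3 → ∀ B₁ B₂ : Polynomial F,
      degLE F B₁ ((m:ℤ) - (↑(r+1)) - 1) →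
      degLE F B₂ ((m:ℤ) - ((↑(n+1):ℤ) + 2 - (↑(r+1))) - 1) →
      (hankel F l m α').mulVec (fun i : Fin m => (B₁*A₁ + B₂*A₂').coeff i.1) = 0 := by
    intro l m hlm B₁ B₂ hB1 hB2
    have hB2' : degLE F B₂ ((m:ℤ) - ((n:ℤ)+2-r) - 1) := by
      intro i hi; exact hB2 i (by push_cast at hi ⊢; omega)
    have hPm : ∀ j, m ≤ j → (B₁*A₁ + B₂*A₂').coeff j = 0 := by
      intro j hj
      rw [Polynomial.coeff_add,
        degLE_coeff_mul hB1 (le_of_eq hnd1) j (by push_cast; omega),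
        degLE_coeff_mul hB2' hnd2' j (by omega), add_zero]
    funext i
    have hil : i.1 < l := i.isLt
    rw [hankel_mulVec_row α' l m _ hPm i, Pi.zero_apply, sfn_add,
      sfn_mul_range α' i.1 B₁ A₁ m (fun j hj => hB1 j (by push_cast; omega)),
      sfn_mul_range α' i.1 B₂ A₂' m (fun j hj => hB2' j (by omega))]
    have hsum1 : ∑ t ∈ Finset.range m, B₁.coeff t * sfn α' (i.1+t) A₁ = 0 := by
      apply Finset.sum_eq_zero
      intro t ht
      by_cases hbt : B₁.coeff t = 0
      · rw [hbt, zero_mul]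
      · have htle : (t:ℤ) ≤ (m:ℤ) - (↑(r+1)) - 1 := by
          by_contra hcon
          push_neg at hcon
          exact hbt (hB1 t hcon)
        rw [hu0 (i.1+t) (by push_cast at htle; omega), mul_zero]
    have hsum2 : ∑ t ∈ Finset.range m, B₂.coeff t * sfn α' (i.1+t) A₂' = 0 := by
      apply Finset.sum_eq_zero
      intro t ht
      by_cases hbt : B₂.coeff t = 0
      · rw [hbt, zero_mul]
      · have htle : (t:ℤ) ≤ (m:ℤ) - ((n:ℤ)+2-r) - 1 := by
          by_contra hcon
          push_neg at hcon
          exact hbt (hB2' t hcon)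
        rw [ht' (i.1+t) (by omega), mul_zero]
    rw [hsum1, hsum2, add_zero]
  -- the characteristic property of the extension
  have key : IsCharSeq F (n+1) (r+1) A₁ A₂' α' := by
    intro l m hl hm hlm
    ext v
    simp only [Set.mem_setOf_eq]
    constructor
    · intro hv
      rcases Nat.lt_or_ge l 2 with hl1 | hl2
      · -- l = 1
        have hl1' : l = 1 := by omega
        subst hl1'
        have hm' : m = n + 2 := by omega
        subst hm'
        -- the auxiliary kernel vector q = coeffs of X^(r-1) * A₂'
        have hB0 : degLE F (0 : Polynomial F) (((n+2:ℕ):ℤ) - (↑(r+1)) - 1) := fun i _ => rfl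
        have hBq : degLE F ((Polynomial.X : Polynomial F)^(r-1))
            (((n+2:ℕ):ℤ) - ((↑(n+1):ℤ) + 2 - (↑(r+1))) - 1) := by
          intro i hi
          rw [Polynomial.coeff_X_pow, if_neg (by push_cast at hi; omega)]
        have hq0 : (hankel F 1 (n+2) α').mulVec
            (fun i : Fin (n+2) => ((Polynomial.X:Polynomial F)^(r-1) * A₂').coeff i.1) = 0 := by
          have h := hRL 1 (n+2) (by omega) 0 ((Polynomial.X:Polynomial F)^(r-1)) hB0 hBq
          simpa using h
        set κ := v ⟨n+1, by omega⟩ / a with hκdef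
        set v' : Fin (n+2) → F :=
          fun i => v i - κ * ((Polynomial.X:Polynomial F)^(r-1) * A₂').coeff i.1 with hv'def
        have hv'0 : (hankel F 1 (n+2) α').mulVec v' = 0 := by
          funext i
          have h1 := congrFun hv i
          have h2 := congrFun hq0 i
          simp only [Matrix.mulVec, dotProduct, Pi.zero_apply] at h1 h2 ⊢
          calc ∑ j, hankel F 1 (n+2) α' i j * v' j
              = (∑ j, hankel F 1 (n+2) α' i j * v j)
                - κ * ∑ j, hankel F 1 (n+2) α' i j
                    * ((Polynomial.X:Polynomial F)^(r-1) * A₂').coeff j.1 := by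
                rw [Finset.mul_sum, ← Finset.sum_sub_distrib]
                apply Finset.sum_congr rfl
                intro j _
                rw [hv'def]
                ring
            _ = 0 := by rw [h1, h2]; ring
        have hA2'top : A₂'.coeff (n+2-r) = a := by
          rw [hA₂'def, Polynomial.coeff_add, coeff_C_mul_X_pow_mul, if_pos (by omega),
            show n+2-r-e = r by omega,
            Polynomial.coeff_eq_zero_of_natDegree_lt (by rw [hnd1]; omega), mul_zero, zero_add]
        have hqtop : ((Polynomial.X:Polynomial F)^(r-1) * A₂').coeff (n+1) = a := by
          rw [mul_comm, Polynomial.coeff_mul_X_pow', if_pos (by omega),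
            show n+1-(r-1) = n+2-r by omega, hA2'top]
        have hvtop : v' ⟨n+1, by omega⟩ = 0 := by
          show v ⟨n+1, by omega⟩ - κ * ((Polynomial.X:Polynomial F)^(r-1) * A₂').coeff (n+1) = 0
          rw [hqtop, hκdef]
          field_simp
          ring
        set w : Fin (n+1) → F := fun i => v' ⟨i.1, by omega⟩ with hwdef
        have hw0 : (hankel F 1 (n+1) α).mulVec w = 0 := by
          funext i0
          have hi00 : i0.1 = 0 := by omega
          have h := congrFun hv'0 ⟨0, by omega⟩
          simp only [Matrix.mulVec, dotProduct, Pi.zero_apply, hankel, Matrix.of_apply] at h ⊢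
          rw [Fin.sum_univ_castSucc] at h
          have hlast : v' (Fin.last (n+1)) = 0 := hvtop
          rw [hlast, mul_zero, add_zero] at h
          rw [← h]
          apply Finset.sum_congr rfl
          intro j _
          rw [hi00]
          show α (0 + j.1) * w j = α' (0 + j.1) * v' (Fin.castSucc j)
          rw [hαeq (0 + j.1) (by have := j.isLt; omega)]
          rfl
        have hiff := Set.ext_iff.mp (hchar 1 (n+1) (by omega) (by omega) (by omega)) w
        obtain ⟨D₁, D₂, hD1, hD2, hweq⟩ := hiff.mp hw0
        refine ⟨D₁ - Polynomial.C β * Polynomial.X^e * D₂,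
          D₂ + Polynomial.C κ * Polynomial.X^(r-1), ?_, ?_, ?_⟩
        · intro i hi
          rw [Polynomial.coeff_sub, coeff_C_mul_X_pow_mul,
            hD1 i (by push_cast at hi ⊢; omega)]
          split_ifs with hei
          · rw [hD2 (i-e) (by push_cast at hi ⊢; omega)]
            ring
          · ring
        · intro i hi
          rw [Polynomial.coeff_add, hD2 i (by push_cast at hi ⊢; omega),
            Polynomial.coeff_C_mul, Polynomial.coeff_X_pow,
            if_neg (by push_cast at hi; omega), mul_zero, add_zero]
        · funext i
          have hpoly : (D₁ - Polynomial.C β * Polynomial.X^e * D₂) * A₁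
              + (D₂ + Polynomial.C κ * Polynomial.X^(r-1)) * A₂'
              = (D₁*A₁ + D₂*A₂) + Polynomial.C κ * ((Polynomial.X:Polynomial F)^(r-1) * A₂') := by
            rw [hA₂'def]
            ring
          rw [hpoly, Polynomial.coeff_add, Polynomial.coeff_C_mul]
          have hvi : v i = v' i + κ * ((Polynomial.X:Polynomial F)^(r-1) * A₂').coeff i.1 := by
            rw [hv'def]
            ring
          rw [hvi]
          congr 1
          rcases Nat.lt_or_ge i.1 (n+1) with hi | hi
          · have h := congrFun hweq ⟨i.1, hi⟩
            have hw' : w ⟨i.1, hi⟩ = v' i := rfl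
            rw [← hw', h]
          · have hi1 : i.1 = n+1 := by have := i.isLt; omega
            have hieq : i = ⟨n+1, by omega⟩ := Fin.ext hi1
            rw [hieq, hvtop]
            have hc1 : (D₁*A₁).coeff (n+1) = 0 :=
              degLE_coeff_mul hD1 (le_of_eq hnd1) (n+1) (by push_cast; omega)
            have hc2 : (D₂*A₂).coeff (n+1) = 0 :=
              degLE_coeff_mul hD2 (le_of_eq hnd2) (n+1) (by omega)
            show (0:F) = (D₁*A₁ + D₂*A₂).coeff (n+1)
            rw [Polynomial.coeff_add, hc1, hc2, add_zero]
      · -- l ≥ 2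
        have hmem0 : (hankel F (l-1) m α).mulVec v = 0 := by
          funext i
          have hrow := congrFun hv ⟨i.1, by omega⟩
          rw [Pi.zero_apply] at hrow ⊢
          rw [← hrow]
          simp only [Matrix.mulVec, dotProduct, hankel, Matrix.of_apply]
          apply Finset.sum_congr rfl
          intro j _
          congr 1
          exact (hαeq (i.1 + j.1) (by have := i.isLt; have := j.isLt; omega)).symm
        have hiff := Set.ext_iff.mp (hchar (l-1) m (by omega) hm (by omega)) v
        obtain ⟨B₁, B₂, hB1, hB2, hveq⟩ := hiff.mp hmem0
        have hPm : ∀ j, m ≤ j → (B₁ * A₁ + B₂ * A₂).coeff j = 0 := by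
          intro j hj
          rw [Polynomial.coeff_add,
            degLE_coeff_mul hB1 (le_of_eq hnd1) j (by push_cast; omega),
            degLE_coeff_mul hB2 (le_of_eq hnd2) j (by omega), add_zero]
        have hrow := congrFun hv ⟨l-1, by omega⟩
        rw [hveq, Pi.zero_apply,
          hankel_mulVec_row α' l m _ hPm ⟨l-1, by omega⟩] at hrow
        rw [show ((⟨l-1, by omega⟩ : Fin l) : ℕ) = l-1 from rfl] at hrow
        rw [sfn_add,
          sfn_mul_range α' (l-1) B₁ A₁ m (fun j hj => hB1 j (by push_cast; omega)),
          sfn_mul_range α' (l-1) B₂ A₂ m (fun j hj => hB2 j (by omega))] at hrow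
        have hsum1 : ∑ t ∈ Finset.range m, B₁.coeff t * sfn α' (l-1+t) A₁
            = B₁.coeff (m-r-1) * S₁ := by
          rcases Nat.lt_or_ge m (r+1) with hmr | hmr
          · have hB10 : B₁ = 0 := degLE_neg hB1 (by omega)
            simp [hB10]
          · rw [Finset.sum_eq_single (m-r-1)]
            · rw [show l-1+(m-r-1) = n+1-r by omega, hu1]
            · intro t ht htne
              by_cases hbt : B₁.coeff t = 0
              · rw [hbt, zero_mul]
              · have htle : (t:ℤ) ≤ (m:ℤ) - r - 1 := by
                  by_contra hcon
                  push_neg at hcon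
                  exact hbt (hB1 t hcon)
                rw [hu0 (l-1+t) (by omega), mul_zero]
            · intro hna
              exact absurd (Finset.mem_range.mpr (by omega)) hna
        have hsum2 : ∑ t ∈ Finset.range m, B₂.coeff t * sfn α' (l-1+t) A₂
            = B₂.coeff (m-(n+3-r)) * sfn α' (r-1) A₂ := by
          rcases Nat.lt_or_ge m (n+3-r) with hmr | hmr
          · have hB20 : B₂ = 0 := degLE_neg hB2 (by omega)
            simp [hB20]
          · rw [Finset.sum_eq_single (m-(n+3-r))]
            · rw [show l-1+(m-(n+3-r)) = r-1 by omega]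
            · intro t ht htne
              by_cases hbt : B₂.coeff t = 0
              · rw [hbt, zero_mul]
              · have htle : (t:ℤ) ≤ (m:ℤ) - ((n:ℤ)+2-r) - 1 := by
                  by_contra hcon
                  push_neg at hcon
                  exact hbt (hB2 t hcon)
                rw [ht'A2 (l-1+t) (by omega), mul_zero]
            · intro hna
              exact absurd (Finset.mem_range.mpr (by omega)) hna
        rw [hsum1, hsum2, hTc] at hrow
        have h0 : (B₁.coeff (m-r-1) - β * B₂.coeff (m-(n+3-r))) * S₁ = 0 := by
          linear_combination hrow
        have hbb : B₁.coeff (m-r-1) = β * B₂.coeff (m-(n+3-r)) := by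
          rcases mul_eq_zero.mp h0 with h | h
          · exact sub_eq_zero.mp h
          · exact absurd h hS₁
        refine ⟨B₁ - Polynomial.C β * Polynomial.X^e * B₂, B₂, ?_, ?_, ?_⟩
        · intro i hi
          rw [Polynomial.coeff_sub, coeff_C_mul_X_pow_mul]
          rcases lt_or_ge ((m:ℤ) - r - 1) (i:ℤ) with hii | hii
          · rw [hB1 i hii]
            split_ifs with hei
            · rw [hB2 (i-e) (by omega)]
              ring
            · ring
          · have hieq : (i:ℕ) = m - r - 1 ∧ r + 1 ≤ m := by push_cast at hi; omega
            obtain ⟨hieq, hmr⟩ := hieq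
            split_ifs with hei
            · rw [hieq, show m-r-1-e = m-(n+3-r) by omega, hbb]
              ring
            · have hB20 : B₂ = 0 := degLE_neg hB2 (by omega)
              rw [hieq, hbb, hB20]
              simp
        · intro i hi
          exact hB2 i (by push_cast at hi ⊢; omega)
        · rw [hveq]
          rw [show (B₁ - Polynomial.C β * Polynomial.X^e * B₂) * A₁ + B₂ * A₂'
              = B₁ * A₁ + B₂ * A₂ from by rw [hA₂'def]; ring]
    · rintro ⟨B₁, B₂, hB1, hB2, hveq⟩
      rw [hveq]
      exact hRL l m (by omega) B₁ B₂ hB1 hB2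
  -- rank computation
  have hrank' : (hankel F ((n+3)/2) ((n+4)/2) α').rank = r + 1 := by
    set L := (n+3)/2 with hL
    set m := (n+4)/2 with hm
    have hlm : L + m = n + 3 := by omega
    have hmr : r + 2 ≤ m ∧ m + r ≤ n + 2 := by omega
    set d := m - r - 1 with hd
    have hset := key L m (by omega) (by omega) hlm
    set M : Matrix (Fin m) (Fin d) F :=
      Matrix.of (fun i t => ((Polynomial.X:Polynomial F)^(t:ℕ) * A₁).coeff i.1) with hM
    have hMspec : ∀ (u : Fin d → F) (i : Fin m),
        M.mulVec u i = ((∑ t : Fin d, Polynomial.C (u t) * Polynomial.X^(t:ℕ)) * A₁).coeff i.1 := by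
      intro u i
      rw [Finset.sum_mul, Polynomial.finset_sum_coeff]
      simp only [Matrix.mulVec, dotProduct, hM, Matrix.of_apply]
      apply Finset.sum_congr rfl
      intro t _
      rw [mul_assoc, Polynomial.coeff_C_mul]
      ring
    have hBwc : ∀ (u : Fin d → F) (j : ℕ), d ≤ j →
        (∑ t : Fin d, Polynomial.C (u t) * Polynomial.X^(t:ℕ)).coeff j = 0 := by
      intro u j hj
      rw [Polynomial.finset_sum_coeff]
      apply Finset.sum_eq_zero
      intro t _
      rw [Polynomial.coeff_C_mul, Polynomial.coeff_X_pow,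
        if_neg (by have := t.isLt; omega), mul_zero]
    have hBwcoeff : ∀ (u : Fin d → F) (t0 : Fin d),
        (∑ t : Fin d, Polynomial.C (u t) * Polynomial.X^(t:ℕ)).coeff t0.1 = u t0 := by
      intro u t0
      rw [Polynomial.finset_sum_coeff, Finset.sum_eq_single t0]
      · rw [Polynomial.coeff_C_mul, Polynomial.coeff_X_pow, if_pos rfl, mul_one]
      · intro t _ htne
        rw [Polynomial.coeff_C_mul, Polynomial.coeff_X_pow,
          if_neg (fun hc => htne (Fin.ext hc.symm)), mul_zero]
      · intro hna
        exact absurd (Finset.mem_univ t0) hna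
    have hker : LinearMap.ker (Matrix.mulVecLin (hankel F L m α'))
        = LinearMap.range M.mulVecLin := by
      ext v
      rw [LinearMap.mem_ker, LinearMap.mem_range, Matrix.mulVecLin_apply]
      constructor
      · intro h0
        have hmem := (Set.ext_iff.mp hset v).mp h0
        obtain ⟨B₁, B₂, hB1, hB2, hveq⟩ := hmem
        have hB20 : B₂ = 0 := degLE_neg hB2 (by push_cast; omega)
        refine ⟨fun t => B₁.coeff t.1, ?_⟩
        rw [Matrix.mulVecLin_apply]
        funext i
        rw [hMspec, hveq]
        have hBeq : (∑ t : Fin d, Polynomial.C (B₁.coeff t.1) * Polynomial.X^(t:ℕ)) = B₁ := by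
          apply Polynomial.ext
          intro j
          rcases Nat.lt_or_ge j d with hj | hj
          · exact hBwcoeff _ ⟨j, hj⟩
          · rw [hBwc _ j hj, hB1 j (by push_cast; omega)]
        rw [hBeq, hB20]
        simp
      · rintro ⟨u, rfl⟩
        rw [Matrix.mulVecLin_apply]
        have hmem : M.mulVec u ∈ {v : Fin m → F | (hankel F L m α').mulVec v = 0} := by
          rw [hset]
          refine ⟨∑ t : Fin d, Polynomial.C (u t) * Polynomial.X^(t:ℕ), 0, ?_, fun i _ => rfl, ?_⟩
          · intro i hi
            exact hBwc u i (by push_cast at hi; omega)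
          · funext i
            rw [hMspec]
            simp
        exact hmem
    have hinj : Function.Injective M.mulVecLin := by
      rw [← LinearMap.ker_eq_bot]
      rw [Submodule.eq_bot_iff]
      intro u hu
      rw [LinearMap.mem_ker, Matrix.mulVecLin_apply] at hu
      have hpoly : (∑ t : Fin d, Polynomial.C (u t) * Polynomial.X^(t:ℕ)) * A₁ = 0 := by
        apply Polynomial.ext
        intro j
        rcases Nat.lt_or_ge j m with hj | hj
        · have := congrFun hu ⟨j, hj⟩
          rw [hMspec] at this
          simpa using this
        · rw [Polynomial.coeff_zero]
          apply Polynomial.coeff_eq_zero_of_natDegree_lt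
          apply lt_of_le_of_lt Polynomial.natDegree_mul_le
          have h1 : (∑ t : Fin d, Polynomial.C (u t) * Polynomial.X^(t:ℕ)).natDegree ≤ d := by
            apply Polynomial.natDegree_sum_le_of_forall_le
            intro t _
            apply le_trans Polynomial.natDegree_mul_le
            simp [Polynomial.natDegree_C, Polynomial.natDegree_X_pow]
          rw [hnd1]
          omega
      have hsum0 : (∑ t : Fin d, Polynomial.C (u t) * Polynomial.X^(t:ℕ)) = 0 :=
        (mul_eq_zero.mp hpoly).resolve_right hA1ne
      funext t
      have := hBwcoeff u t
      rw [hsum0, Polynomial.coeff_zero] at this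
      exact this.symm
    have hrange : Module.finrank F (LinearMap.range M.mulVecLin) = d := by
      rw [LinearMap.finrank_range_of_inj hinj]
      exact Module.finrank_fin_fun F
    have hrn := LinearMap.finrank_range_add_finrank_ker (Matrix.mulVecLin (hankel F L m α'))
    rw [hker, hrange, Module.finrank_fin_fun] at hrn
    rw [Matrix.rank]
    omega
  -- determinant vanishing beyond (n+2)/2
  have hdet0 : ∀ l : ℕ, (n+2)/2 < l → l ≤ (n+3)/2 → (hankel F l l α').det = 0 := by
    intro l h1 h2
    have hll : l + l = n + 3 := by omega
    by_contra hdet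
    have hd1' : degLE F (1 : Polynomial F) ((l:ℤ) - (↑(r+1)) - 1) := by
      intro i hi
      rw [Polynomial.coeff_one, if_neg (by push_cast at hi; omega)]
    have hd2' : degLE F (0 : Polynomial F) ((l:ℤ) - ((↑(n+1):ℤ) + 2 - (↑(r+1))) - 1) :=
      fun i _ => rfl
    have hv := hRL l l hll 1 0 hd1' hd2'
    have hzero := Matrix.eq_zero_of_mulVec_eq_zero hdet hv
    have h := congrFun hzero ⟨ρ₁, by omega⟩
    simp only [Pi.zero_apply, one_mul, zero_mul, add_zero] at h
    exact hlead1 h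
  -- rhoC of the extension
  have hρ' : rhoC F (n+1) α' = ρ₁ := by
    have hbdd : BddAbove {l | l ≤ (n+2)/2 ∧ (hankel F l l α).det ≠ 0} :=
      ⟨(n+2)/2, fun x hx => hx.1⟩
    have hne : {l | l ≤ (n+2)/2 ∧ (hankel F l l α).det ≠ 0}.Nonempty :=
      ⟨0, ⟨by omega, by rw [Matrix.det_isEmpty]; exact one_ne_zero⟩⟩
    have hmem : ρ₁ ∈ {l | l ≤ (n+2)/2 ∧ (hankel F l l α).det ≠ 0} := by
      rw [← hρ, rhoC]
      exact Nat.sSup_mem hne hbdd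
    have hαeq2 : ∀ l, l ≤ (n+2)/2 → hankel F l l α' = hankel F l l α := by
      intro l hl
      apply Matrix.ext
      intro i j
      exact hαeq (i.1 + j.1) (by have := i.isLt; have := j.isLt; omega)
    rw [rhoC]
    apply le_antisymm
    · refine csSup_le ⟨ρ₁, ⟨by omega, by rw [hαeq2 ρ₁ (by omega)]; exact hmem.2⟩⟩ ?_
      intro x hx
      rcases le_or_gt x ((n+2)/2) with hx2 | hx2
      · have hxm : x ∈ {l | l ≤ (n+2)/2 ∧ (hankel F l l α).det ≠ 0} :=
          ⟨hx2, by rw [← hαeq2 x hx2]; exact hx.2⟩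
        calc x ≤ sSup {l | l ≤ (n+2)/2 ∧ (hankel F l l α).det ≠ 0} := le_csSup hbdd hxm
          _ = ρ₁ := by rw [← rhoC]; exact hρ
      · exact absurd (hdet0 x hx2 hx.1) hx.2
    · apply le_csSup ⟨(n+1+2)/2, fun x hx => hx.1⟩
      exact ⟨by omega, by rw [hαeq2 ρ₁ (by omega)]; exact hmem.2⟩
  refine ⟨hρ', ?_, hrank', key⟩
  rw [piC, show n+1+2 = n+3 from by omega, show n+1+3 = n+4 from by omega, hrank', hρ']
  omega
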